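/- Let 𝒰 be a cube partition of ℕ⁺ of order (ℓ₁,...,ℓ_r) whose classes each have upper density ∏_{i=1}^r(1/ℓᵢ), with cube colouring c_𝒰. Then every directed monochromatic path in colour r+1 has upper density at most ∏_{i=1}^r(1/ℓᵢ). -/

import Mathlib

open scoped Classical

/-- Upper density of a set of positive integers. -/
noncomputable def upperDensity (A : Set ℕ) : ℝ :=
  Filter.limsup
    (fun n : ℕ => (((Finset.Icc 1 n).filter (fun m => m ∈ A)).card : ℝ) / n)
    Filter.atTop

/-- `k` is the least index at which the tuples `a` and `b` differ. -/
def LeastDiff {r : ℕ} {ℓ : Fin r → ℕ} (a b : ∀ i, Fin (ℓ i)) (k : Fin r) : Prop :=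
  a k ≠ b k ∧ ∀ k' : Fin r, k' < k → a k' = b k'

/-- `c` is the cube colouring associated to the cube partition whose classes are
the fibres of `f` (which maps each positive integer to the index of its class in
the cube `∏ i, {0, …, ℓ i - 1}`): edges within a class get colour `r + 1`; for
`m, n` in different classes with least differing index `k`, if the `k`-th
coordinate of `m`'s class is smaller then `(m, n)` gets colour `r + 1` and
`(n, m)` gets colour `k`. -/
def IsCubeColouring {r : ℕ} {ℓ : Fin r → ℕ} (f : ℕ → ∀ i, Fin (ℓ i))
    (c : ℕ → ℕ → Fin (r + 1)) : Prop :=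
  ∀ m n : ℕ, m ≠ n →
    (f m = f n → c m n = Fin.last r) ∧
    ∀ k : Fin r, LeastDiff (f m) (f n) k →
      (f m k < f n k → c m n = Fin.last r) ∧
      (f n k < f m k → c m n = k.castSucc)

lemma upperDensity_seq_le_one (A : Set ℕ) :
    ∀ n : ℕ, (((Finset.Icc 1 n).filter (fun m => m ∈ A)).card : ℝ) / n ≤ 1 := by
  intro n
  rcases Nat.eq_zero_or_pos n with h | h
  · simp [h]
  · rw [div_le_one (by exact_mod_cast h)]
    have h1 : ((Finset.Icc 1 n).filter (fun m => m ∈ A)).card ≤ (Finset.Icc 1 n).card :=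
      Finset.card_filter_le _ _
    have h2 : (Finset.Icc 1 n).card = n := by simp
    exact_mod_cast h1.trans_eq h2

lemma upperDensity_seq_nonneg (A : Set ℕ) :
    ∀ n : ℕ, (0 : ℝ) ≤ (((Finset.Icc 1 n).filter (fun m => m ∈ A)).card : ℝ) / n := by
  intro n; positivity

/-- If `A ⊆ B ∪ F` with `F` finite then `upperDensity A ≤ upperDensity B`. -/
lemma upperDensity_le_of_subset_union {A B F : Set ℕ} (hF : F.Finite) (h : A ⊆ B ∪ F) :
    upperDensity A ≤ upperDensity B := by
  set a : ℕ → ℝ := fun n => (((Finset.Icc 1 n).filter (fun m => m ∈ A)).card : ℝ) / n with ha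
  set b : ℕ → ℝ := fun n => (((Finset.Icc 1 n).filter (fun m => m ∈ B)).card : ℝ) / n with hb
  have hbdd_b : Filter.IsBoundedUnder (· ≤ ·) Filter.atTop b :=
    Filter.isBoundedUnder_of ⟨1, upperDensity_seq_le_one B⟩
  have hcobdd_a : Filter.IsCoboundedUnder (· ≤ ·) Filter.atTop a :=
    Filter.IsBoundedUnder.isCoboundedUnder_le
      (Filter.isBoundedUnder_of ⟨0, fun n => (upperDensity_seq_nonneg A n : _)⟩)
  have hcobdd_b : Filter.IsCoboundedUnder (· ≤ ·) Filter.atTop b :=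
    Filter.IsBoundedUnder.isCoboundedUnder_le
      (Filter.isBoundedUnder_of ⟨0, fun n => (upperDensity_seq_nonneg B n : _)⟩)
  set K : ℕ := hF.toFinset.card with hK
  have hcard : ∀ n : ℕ, ((Finset.Icc 1 n).filter (fun m => m ∈ A)).card ≤
      ((Finset.Icc 1 n).filter (fun m => m ∈ B)).card + K := by
    intro n
    have hsub : (Finset.Icc 1 n).filter (fun m => m ∈ A) ⊆
        ((Finset.Icc 1 n).filter (fun m => m ∈ B)) ∪ hF.toFinset := by
      intro m hm
      rw [Finset.mem_filter] at hm
      rcases h hm.2 with hB | hFm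
      · exact Finset.mem_union_left _ (Finset.mem_filter.2 ⟨hm.1, hB⟩)
      · exact Finset.mem_union_right _ (hF.mem_toFinset.2 hFm)
    calc ((Finset.Icc 1 n).filter (fun m => m ∈ A)).card
        ≤ (((Finset.Icc 1 n).filter (fun m => m ∈ B)) ∪ hF.toFinset).card :=
          Finset.card_le_card hsub
      _ ≤ ((Finset.Icc 1 n).filter (fun m => m ∈ B)).card + K := Finset.card_union_le _ _
  have key : ∀ ε : ℝ, 0 < ε → upperDensity A ≤ upperDensity B + ε := by
    intro ε hε
    have htend : Filter.Tendsto (fun n : ℕ => (K : ℝ) / n) Filter.atTop (nhds 0) :=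
      tendsto_const_div_atTop_nhds_zero_nat (K : ℝ)
    have hev : ∀ᶠ n in Filter.atTop, a n ≤ b n + ε := by
      have h1 : ∀ᶠ n : ℕ in Filter.atTop, (K : ℝ) / (n : ℝ) ≤ ε :=
        htend.eventually (eventually_le_nhds hε)
      filter_upwards [h1, Filter.eventually_gt_atTop 0] with n hn hn0
      have hn0' : (0 : ℝ) < n := by exact_mod_cast hn0
      have h3 : a n ≤ b n + (K : ℝ) / n := by
        rw [ha, hb]
        simp only
        rw [← add_div]
        gcongr
        exact_mod_cast hcard n
      exact h3.trans (by linarith)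
    have h1 : upperDensity A ≤ Filter.limsup (fun n => b n + ε) Filter.atTop := by
      refine Filter.limsup_le_limsup hev hcobdd_a ?_
      exact Filter.isBoundedUnder_of ⟨1 + ε, fun n => by
        have := upperDensity_seq_le_one B n
        simp only [hb]; linarith⟩
    have h2 : Filter.limsup (fun n => b n + ε) Filter.atTop = upperDensity B + ε :=
      limsup_add_const Filter.atTop b ε hbdd_b hcobdd_b
    calc upperDensity A ≤ _ := h1
      _ = _ := h2
  exact le_of_forall_pos_le_add key

theorem stmt11 (r : ℕ) (ℓ : Fin r → ℕ) (hℓ : ∀ i, 0 < ℓ i)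
    (f : ℕ → ∀ i, Fin (ℓ i))
    (hdens : ∀ x : ∀ i, Fin (ℓ i),
      upperDensity (f ⁻¹' {x}) = ∏ i, (1 : ℝ) / ℓ i)
    (c : ℕ → ℕ → Fin (r + 1)) (hc : IsCubeColouring f c) :
    (∀ v : ℕ → ℕ, Function.Injective v →
      (∀ i : ℕ, c (v i) (v (i + 1)) = Fin.last r) →
      upperDensity (Set.range v) ≤ ∏ i, (1 : ℝ) / ℓ i) ∧
    (∀ (m : ℕ) (v : Fin (m + 1) → ℕ), Function.Injective v →
      (∀ j : Fin m, c (v j.castSucc) (v j.succ) = Fin.last r) →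
      upperDensity (Set.range v) ≤ ∏ i, (1 : ℝ) / ℓ i) := by
  -- colour-last edges are lex-nondecreasing
  have key : ∀ m n : ℕ, m ≠ n → c m n = Fin.last r → toLex (f m) ≤ toLex (f n) := by
    intro m n hmn hcol
    by_cases hfe : f m = f n
    · exact le_of_eq (congrArg toLex hfe)
    · have hex : ∃ k, f m k ≠ f n k := Function.ne_iff.1 hfe
      set s : Finset (Fin r) := Finset.univ.filter (fun k => f m k ≠ f n k) with hs
      have hsne : s.Nonempty := by
        obtain ⟨k, hk⟩ := hex
        exact ⟨k, by simp [hs, hk]⟩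
      set k0 : Fin r := s.min' hsne with hk0
      have hk0mem : f m k0 ≠ f n k0 := by
        have := s.min'_mem hsne
        simpa [hs] using this
      have hld : LeastDiff (f m) (f n) k0 := by
        refine ⟨hk0mem, fun k' hk' => ?_⟩
        by_contra hne
        have : k0 ≤ k' := s.min'_le k' (by simp [hs, hne])
        exact absurd hk' (not_lt.2 this)
      rcases lt_or_gt_of_ne hk0mem with hlt | hgt
      · exact le_of_lt ⟨k0, fun j hj => hld.2 j hj, hlt⟩
      · have h5 := ((hc m n hmn).2 k0 hld).2 hgt
        rw [hcol] at h5
        exact absurd h5.symm (Fin.castSucc_lt_last k0).ne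
  constructor
  · -- infinite path
    intro v hv hpath
    set g : ℕ → Lex (∀ i, Fin (ℓ i)) := fun i => toLex (f (v i)) with hg
    have hmono : Monotone g := monotone_nat_of_le_succ fun i =>
      key (v i) (v (i + 1)) (fun h => by simpa using hv h) (hpath i)
    haveI : Finite (Lex (∀ i, Fin (ℓ i))) := inferInstanceAs (Finite (∀ i, Fin (ℓ i)))
    obtain ⟨N, -, hNmax⟩ :=
      Set.Finite.exists_maximalFor' g Set.univ
        (Set.toFinite _) ⟨0, trivial⟩
    have hconst : ∀ i, N ≤ i → f (v i) = f (v N) := by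
      intro i hi
      have h1 : g N ≤ g i := hmono hi
      have h2 : g N = g i := le_antisymm h1 (hNmax trivial h1)
      exact (toLex.injective h2).symm
    have hsub : Set.range v ⊆ (f ⁻¹' {f (v N)}) ∪ (v '' Set.Iio N) := by
      rintro _ ⟨i, rfl⟩
      rcases lt_or_ge i N with hi | hi
      · exact Or.inr ⟨i, hi, rfl⟩
      · exact Or.inl (hconst i hi)
    calc upperDensity (Set.range v)
        ≤ upperDensity (f ⁻¹' {f (v N)}) :=
          upperDensity_le_of_subset_union ((Set.finite_Iio N).image v) hsub
      _ = ∏ i, (1 : ℝ) / ℓ i := hdens _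
  · -- finite path
    intro m v _ _
    have hfin : (Set.range v).Finite := Set.finite_range v
    calc upperDensity (Set.range v)
        ≤ upperDensity (f ⁻¹' {fun i => ⟨0, hℓ i⟩}) :=
          upperDensity_le_of_subset_union hfin (fun y hy => Or.inr hy)
      _ = ∏ i, (1 : ℝ) / ℓ i := hdens _
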